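/- Let D ⊂ ℂⁿ be a bounded convex open set, x a strictly convex boundary point (i.e., ch(x) = {x}), and suppose sequences {z_ν}, {w_ν} in D converge to boundary points x and y respectively with sup_ν k_D(z_ν, w_ν) < +∞, where k_D satisfies the convexity estimate k_D(s z₁+(1-s)w₁, s z₂+(1-s)w₂) ≤ max(k_D(z₁,z₂), k_D(w₁,w₂)) and k_D-bounded sets are relatively compact in D. Then x = y. -/

import Mathlib

/-- Let `D ⊆ ℂⁿ` be a bounded convex open set, `x ∈ ∂D` a strictly convex
boundary point, and `k` a distance on `D` satisfying the convexity estimate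
and whose bounded sets are relatively compact in `D`.  If sequences in `D`
converge to `x` and to `y ∈ ∂D` while remaining at bounded `k`-distance,
then `x = y`. -/
theorem eq_of_strictly_convex_point {n : ℕ}
    {D : Set (Fin n → ℂ)} (hconv : Convex ℝ D) (hopen : IsOpen D)
    (hbd : Bornology.IsBounded D)
    (k : (Fin n → ℂ) → (Fin n → ℂ) → ℝ)
    -- `k` is a distance on `D`:
    (hk_nonneg : ∀ z ∈ D, ∀ w ∈ D, 0 ≤ k z w)
    (hk_eq_zero : ∀ z ∈ D, ∀ w ∈ D, (k z w = 0 ↔ z = w))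
    (hk_symm : ∀ z ∈ D, ∀ w ∈ D, k z w = k w z)
    (hk_triangle : ∀ z ∈ D, ∀ w ∈ D, ∀ u ∈ D, k z u ≤ k z w + k w u)
    -- `k`-bounded subsets of `D` are relatively compact in `D`:
    (hk_proper : ∀ S ⊆ D, (∃ z₀ ∈ D, ∃ c : ℝ, ∀ z ∈ S, k z₀ z ≤ c) →
      IsCompact (closure S) ∧ closure S ⊆ D)
    -- convexity estimate:
    (hk_convex : ∀ z₁ ∈ D, ∀ z₂ ∈ D, ∀ w₁ ∈ D, ∀ w₂ ∈ D, ∀ s ∈ Set.Icc (0:ℝ) 1,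
      k (s • z₁ + (1 - s) • w₁) (s • z₂ + (1 - s) • w₂) ≤ max (k z₁ z₂) (k w₁ w₂))
    {x y : Fin n → ℂ} (hx : x ∈ frontier D) (hy : y ∈ frontier D)
    -- `x` is a strictly convex point: `ch(x) = {x}`:
    (hstrict : ∀ y' ∈ frontier D, segment ℝ x y' ⊆ frontier D → y' = x)
    {zs ws : ℕ → Fin n → ℂ} (hzs : ∀ ν, zs ν ∈ D) (hws : ∀ ν, ws ν ∈ D)
    (hzx : Filter.Tendsto zs Filter.atTop (nhds x))
    (hwy : Filter.Tendsto ws Filter.atTop (nhds y))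
    {c : ℝ} (hc : ∀ ν, k (zs ν) (ws ν) ≤ c) :
    x = y := by
  have hxcl : x ∈ closure D := frontier_subset_closure hx
  have hycl : y ∈ closure D := frontier_subset_closure hy
  set C : ℝ := max c 0 with hCdef
  have hC0 : (0:ℝ) ≤ C := le_max_right _ _
  -- every point of the segment [x,y] is outside D
  have key : ∀ p ∈ segment ℝ x y, p ∉ D := by
    intro p hp hpD
    obtain ⟨a, b, ha, hb, hab, hpe⟩ := hp
    have hb_eq : b = 1 - a := by linarith
    have ha1 : a ≤ 1 := by linarith
    set u : ℕ → Fin n → ℂ := fun ν => a • zs ν + (1 - a) • ws ν with hu_def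
    have huD : ∀ ν, u ν ∈ D := fun ν => hconv (hzs ν) (hws ν) ha (by linarith) (by ring)
    -- each u ν is at bounded k-distance from zs ν
    have hk_zu : ∀ ν, k (zs ν) (u ν) ≤ C := by
      intro ν
      have h := hk_convex (zs ν) (hzs ν) (zs ν) (hzs ν) (zs ν) (hzs ν) (ws ν) (hws ν)
        a ⟨ha, ha1⟩
      have e1 : a • zs ν + (1 - a) • zs ν = zs ν := by
        rw [← add_smul]; norm_num
      rw [e1] at h
      have e2 : k (zs ν) (zs ν) = 0 := (hk_eq_zero _ (hzs ν) _ (hzs ν)).mpr rfl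
      rw [e2] at h
      calc k (zs ν) (u ν) ≤ max 0 (k (zs ν) (ws ν)) := h
        _ ≤ C := by
            rw [max_le_iff]; exact ⟨hC0, le_trans (hc ν) (le_max_left _ _)⟩
    -- u ν → p
    have hu_t : Filter.Tendsto u Filter.atTop (nhds p) := by
      have := (hzx.const_smul a).add (hwy.const_smul (1 - a))
      rwa [show a • x + (1 - a) • y = p by rw [← hpe, hb_eq]] at this
    -- a closed ball around p inside D
    obtain ⟨r, hr_pos, hball⟩ : ∃ r > 0, Metric.closedBall p r ⊆ D :=
      Metric.nhds_basis_closedBall.mem_iff.mp (hopen.mem_nhds hpD)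
    have hrne : r ≠ 0 := ne_of_gt hr_pos
    set t : ℕ → ℝ := fun ν => ‖u ν - p‖ with ht_def
    have ht_nonneg : ∀ ν, 0 ≤ t ν := fun ν => norm_nonneg _
    obtain ⟨N, hN⟩ : ∃ N, ∀ ν ≥ N, t ν < r := by
      have := Metric.tendsto_atTop.mp hu_t r hr_pos
      obtain ⟨N, hN⟩ := this
      exact ⟨N, fun ν hν => by simpa [ht_def, dist_eq_norm] using hN ν hν⟩
    set s : ℕ → ℝ := fun ν => 1 - t ν / r with hs_def
    set d : ℕ → Fin n → ℂ := fun ν => (t ν)⁻¹ • (p - u ν) with hd_def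
    set bb : ℕ → Fin n → ℂ := fun ν => p + (s ν * r) • d ν with hbb_def
    set z' : ℕ → Fin n → ℂ := fun ν => s ν • zs ν + (1 - s ν) • bb ν with hz'_def
    have hs_mem : ∀ ν ≥ N, s ν ∈ Set.Icc (0:ℝ) 1 := by
      intro ν hν
      constructor
      · have : t ν / r < 1 := (div_lt_one hr_pos).mpr (hN ν hν)
        simp only [hs_def]; linarith
      · have : 0 ≤ t ν / r := div_nonneg (ht_nonneg ν) (le_of_lt hr_pos)
        simp only [hs_def]; linarith
    have hd_norm : ∀ ν, ‖d ν‖ ≤ 1 := by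
      intro ν
      rcases eq_or_ne (t ν) 0 with h0 | h0
      · simp only [hd_def, h0, inv_zero, zero_smul, norm_zero]; norm_num
      · have : ‖d ν‖ = (t ν)⁻¹ * ‖p - u ν‖ := by
          rw [hd_def, norm_smul, Real.norm_eq_abs,
            abs_of_nonneg (inv_nonneg.mpr (ht_nonneg ν))]
        rw [this, norm_sub_rev]
        rw [inv_mul_cancel₀ h0]
    have hbbD : ∀ ν ≥ N, bb ν ∈ D := by
      intro ν hν
      apply hball
      rw [Metric.mem_closedBall, dist_eq_norm]
      have : bb ν - p = (s ν * r) • d ν := by simp [hbb_def]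
      rw [this, norm_smul, Real.norm_eq_abs]
      obtain ⟨hs0, hs1⟩ := hs_mem ν hν
      have h1 : |s ν * r| ≤ r := by
        rw [abs_of_nonneg (mul_nonneg hs0 (le_of_lt hr_pos))]
        nlinarith
      calc |s ν * r| * ‖d ν‖ ≤ r * 1 :=
            mul_le_mul h1 (hd_norm ν) (norm_nonneg _) (le_of_lt hr_pos)
        _ = r := mul_one r
    -- the key identity
    have hident : ∀ ν, s ν • u ν + (1 - s ν) • bb ν = p := by
      intro ν
      rcases eq_or_ne (t ν) 0 with h0 | h0
      · have hup : u ν = p := by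
          have := norm_eq_zero.mp h0
          rwa [sub_eq_zero] at this
        have hs1 : s ν = 1 := by simp [hs_def, h0]
        simp [hs1, hup]
      · have hup : u ν = p - (t ν) • d ν := by
          simp only [hd_def, smul_smul]
          rw [mul_inv_cancel₀ h0, one_smul]
          abel
        rw [hup]
        simp only [hbb_def, hs_def]
        match_scalars <;> field_simp <;> ring
    -- k-bound from p to z' ν
    have hz'D : ∀ ν ≥ N, z' ν ∈ D := by
      intro ν hν
      obtain ⟨hs0, hs1⟩ := hs_mem ν hν
      exact hconv (hzs ν) (hbbD ν hν) hs0 (by linarith) (by ring)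
    have hkp : ∀ ν ≥ N, k p (z' ν) ≤ C := by
      intro ν hν
      have h := hk_convex (u ν) (huD ν) (zs ν) (hzs ν) (bb ν) (hbbD ν hν)
        (bb ν) (hbbD ν hν) (s ν) (hs_mem ν hν)
      rw [hident ν] at h
      have e2 : k (bb ν) (bb ν) = 0 :=
        (hk_eq_zero _ (hbbD ν hν) _ (hbbD ν hν)).mpr rfl
      rw [e2] at h
      have e3 : k (u ν) (zs ν) = k (zs ν) (u ν) := hk_symm _ (huD ν) _ (hzs ν)
      rw [e3] at h
      calc k p (z' ν) ≤ max (k (zs ν) (u ν)) 0 := h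
        _ ≤ C := by rw [max_le_iff]; exact ⟨hk_zu ν, hC0⟩
    -- the set of tail points z' ν
    set S : Set (Fin n → ℂ) := {v | ∃ ν, N ≤ ν ∧ z' ν = v} with hS_def
    have hSD : S ⊆ D := by
      rintro v ⟨ν, hν, rfl⟩; exact hz'D ν hν
    have hScomp := hk_proper S hSD ⟨p, hpD, C, by
      rintro v ⟨ν, hν, rfl⟩; exact hkp ν hν⟩
    -- z' ν → x
    have ht0 : Filter.Tendsto t Filter.atTop (nhds 0) := by
      have := (hu_t.sub (tendsto_const_nhds (x := p))).norm
      simpa using this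
    have hs_t : Filter.Tendsto s Filter.atTop (nhds 1) := by
      have := (tendsto_const_nhds (x := (1:ℝ))).sub (ht0.div_const r)
      simpa using this
    have hz'x : Filter.Tendsto z' Filter.atTop (nhds x) := by
      have h1 : Filter.Tendsto (fun ν => s ν • zs ν) Filter.atTop (nhds x) := by
        have := hs_t.smul hzx
        simpa using this
      have h2 : Filter.Tendsto (fun ν => (1 - s ν) • bb ν) Filter.atTop (nhds 0) := by
        apply squeeze_zero_norm' (a := fun ν => t ν / r * (‖p‖ + r))
        · filter_upwards [Filter.eventually_atTop.mpr ⟨N, fun ν hν => hν⟩] with ν hν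
          have h1s : 1 - s ν = t ν / r := by simp [hs_def]
          rw [norm_smul, Real.norm_eq_abs, h1s,
            abs_of_nonneg (div_nonneg (ht_nonneg ν) (le_of_lt hr_pos))]
          apply mul_le_mul_of_nonneg_left _ (div_nonneg (ht_nonneg ν) (le_of_lt hr_pos))
          calc ‖bb ν‖ ≤ ‖p‖ + ‖(s ν * r) • d ν‖ := norm_add_le _ _
            _ ≤ ‖p‖ + r := by
                apply add_le_add le_rfl
                rw [norm_smul, Real.norm_eq_abs]
                obtain ⟨hs0, hs1⟩ := hs_mem ν hν
                have h1 : |s ν * r| ≤ r := by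
                  rw [abs_of_nonneg (mul_nonneg hs0 (le_of_lt hr_pos))]; nlinarith
                calc |s ν * r| * ‖d ν‖ ≤ r * 1 :=
                      mul_le_mul h1 (hd_norm ν) (norm_nonneg _) (le_of_lt hr_pos)
                  _ = r := mul_one r
        · have := (ht0.div_const r).mul_const (‖p‖ + r)
          simpa using this
      have := h1.add h2
      simpa using this
    have hxS : x ∈ closure S :=
      mem_closure_of_tendsto hz'x
        (Filter.eventually_atTop.mpr ⟨N, fun ν hν => ⟨ν, hν, rfl⟩⟩)
    have hxD : x ∈ D := hScomp.2 hxS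
    have : x ∉ D := fun h => ((hopen.frontier_eq ▸ hx).2) h
    exact this hxD
  -- the segment [x,y] lies in the frontier
  have hseg : segment ℝ x y ⊆ frontier D := by
    intro p hp
    rw [hopen.frontier_eq]
    exact ⟨hconv.closure.segment_subset hxcl hycl hp, key p hp⟩
  exact (hstrict y hy (by
    intro p hp
    exact hseg hp)).symm
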